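/- The iterated integral ∫₀¹ ∫₀^{1−x} 1/(2(1−x)(x+y)) dy dx equals π²/12; equivalently, ∫₀¹ (log x)/(2(x−1)) dx = π²/12. -/

import Mathlib

section CassaigneAux
open Real intervalIntegral MeasureTheory

private lemma intInt (n : ℕ) : IntervalIntegrable (fun x : ℝ => x ^ n * Real.log x) volume 0 1 := by
  have hb : IntervalIntegrable (fun x : ℝ => 2 * x ^ (-(1:ℝ)/2)) volume 0 1 :=
    (intervalIntegrable_rpow' (by norm_num)).const_mul 2
  rw [intervalIntegrable_iff_integrableOn_Ioc_of_le (by norm_num)] at hb ⊢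
  refine hb.mono' ?_ ?_
  · exact ((measurable_id.pow_const n).mul Real.measurable_log).aestronglyMeasurable
  · filter_upwards [ae_restrict_mem measurableSet_Ioc] with x hx
    have hx0 : 0 < x := hx.1
    have hx1 : x ≤ 1 := hx.2
    have h1 : |Real.log x| ≤ 2 * x ^ (-(1:ℝ)/2) := by
      rw [abs_of_nonpos (Real.log_nonpos hx0.le hx1)]
      have := Real.log_le_sub_one_of_pos (x := x ^ (-(1:ℝ)/2)) (Real.rpow_pos_of_pos hx0 _)
      rw [Real.log_rpow hx0] at this
      nlinarith [Real.rpow_pos_of_pos hx0 (-(1:ℝ)/2)]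
    have h2 : |x ^ n| ≤ 1 := by
      rw [abs_of_nonneg (by positivity)]
      exact pow_le_one₀ hx0.le hx1
    calc ‖x ^ n * Real.log x‖ = |x ^ n| * |Real.log x| := abs_mul _ _
      _ ≤ 1 * (2 * x ^ (-(1:ℝ)/2)) := by
          apply mul_le_mul h2 h1 (abs_nonneg _) zero_le_one
      _ = 2 * x ^ (-(1:ℝ)/2) := one_mul _

private lemma intVal (n : ℕ) :
    (∫ x in (0:ℝ)..1, x ^ n * Real.log x) = -(1 / ((n:ℝ) + 1) ^ 2) := by
  have hn : ((n:ℝ) + 1) ≠ 0 := by positivity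
  set F : ℝ → ℝ := fun x => (x ^ n * (x * Real.log x)) / (n + 1) - x ^ (n + 1) / ((n:ℝ) + 1) ^ 2
    with hF
  have hcont : ContinuousOn F (Set.Icc 0 1) := by
    apply Continuous.continuousOn
    fun_prop (disch := norm_num)
  have hderiv : ∀ x ∈ Set.Ioo (0:ℝ) 1, HasDerivAt F (x ^ n * Real.log x) x := by
    intro x hx
    have hx0 : x ≠ 0 := ne_of_gt hx.1
    have h1 : HasDerivAt (fun x : ℝ => x ^ n * (x * Real.log x))
        ((n : ℝ) * x ^ (n - 1) * (x * Real.log x) + x ^ n * (Real.log x + 1)) x :=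
      (hasDerivAt_pow n x).mul (Real.hasDerivAt_mul_log hx0)
    have h2 : HasDerivAt (fun x : ℝ => x ^ (n+1)) (((n:ℝ) + 1) * x ^ n) x := by
      simpa using hasDerivAt_pow (n+1) x
    have := (h1.div_const ((n:ℝ)+1)).sub (h2.div_const (((n:ℝ)+1)^2))
    refine this.congr_deriv ?_
    have hxn : (n:ℝ) * x ^ (n-1) * x = n * x ^ n := by
      cases n with
      | zero => simp
      | succ m => push_cast [pow_succ]; ring
    have key : (n:ℝ) * x ^ (n-1) * (x * Real.log x) + x ^ n * (Real.log x + 1)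
        = ((n:ℝ)+1) * (x ^ n * Real.log x) + x ^ n := by
      rw [show (n:ℝ) * x ^ (n-1) * (x * Real.log x) = ((n:ℝ) * x ^ (n-1) * x) * Real.log x by ring,
        hxn]; ring
    rw [key]
    field_simp
    ring
  have := intervalIntegral.integral_eq_sub_of_hasDeriv_right_of_le (by norm_num : (0:ℝ) ≤ 1)
    hcont (fun x hx => (hderiv x hx).hasDerivWithinAt) (intInt n)
  rw [this]
  simp [hF]

private lemma hsum1 : HasSum (fun n : ℕ => 1 / ((n:ℝ) + 1) ^ 2) (π ^ 2 / 6) := by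
  have h := hasSum_zeta_two
  rw [← hasSum_nat_add_iff' 1] at h
  simpa using h

private lemma main2 : (∫ x in (0:ℝ)..1, Real.log x / (2 * (x - 1))) = π ^ 2 / 12 := by
  set g : ℕ → ℝ → ℝ := fun n x => -(1/2) * (x ^ n * Real.log x) with hg
  have hgint : ∀ n, IntegrableOn (g n) (Set.Ioc (0:ℝ) 1) volume := by
    intro n
    have := (intInt n).const_mul (-(1/2))
    rwa [intervalIntegrable_iff_integrableOn_Ioc_of_le zero_le_one] at this
  have hgval : ∀ n, ∫ x in Set.Ioc (0:ℝ) 1, g n x = (1 / ((n:ℝ)+1)^2) / 2 := by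
    intro n
    rw [← intervalIntegral.integral_of_le zero_le_one]
    rw [hg]
    simp only []
    rw [intervalIntegral.integral_const_mul, intVal]
    ring
  have hgnn : ∀ n, ∀ x ∈ Set.Ioc (0:ℝ) 1, 0 ≤ g n x := by
    intro n x hx
    simp only [hg]
    nlinarith [Real.log_nonpos hx.1.le hx.2, pow_nonneg hx.1.le n]
  have hmeas : ∀ n, AEStronglyMeasurable (g n) (volume.restrict (Set.Ioc (0:ℝ) 1)) := by
    intro n
    exact (((measurable_id.pow_const n).mul Real.measurable_log).const_mul _).aestronglyMeasurable
  have hsummable : Summable (fun n : ℕ => (1 / ((n:ℝ)+1)^2) / 2) := (hsum1.div_const 2).summable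
  have hfin : (∑' n : ℕ, ∫⁻ x in Set.Ioc (0:ℝ) 1, ‖g n x‖₊) ≠ ⊤ := by
    have heq : ∀ n : ℕ, (∫⁻ x in Set.Ioc (0:ℝ) 1, ‖g n x‖₊)
        = ENNReal.ofReal ((1 / ((n:ℝ)+1)^2) / 2) := by
      intro n
      simp_rw [← enorm_eq_nnnorm]
      rw [← MeasureTheory.ofReal_integral_norm_eq_lintegral_enorm (hgint n)]
      congr 1
      rw [← hgval n]
      refine setIntegral_congr_fun measurableSet_Ioc fun x hx => ?_
      exact norm_of_nonneg (hgnn n x hx)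
    simp_rw [heq]
    rw [← ENNReal.ofReal_tsum_of_nonneg (fun n => by positivity) hsummable]
    exact ENNReal.ofReal_ne_top
  rw [intervalIntegral.integral_of_le zero_le_one]
  have hcong : ∀ x ∈ Set.Ioc (0:ℝ) 1, Real.log x / (2 * (x - 1)) = ∑' n : ℕ, g n x := by
    intro x hx
    rcases eq_or_lt_of_le hx.2 with h1 | h1
    · simp [hg, h1]
    · have hx0 := hx.1
      have hgeo : ∑' n : ℕ, (x:ℝ) ^ n = (1 - x)⁻¹ := tsum_geometric_of_lt_one hx0.le h1
      calc Real.log x / (2 * (x - 1))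
          = -(1/2) * ((1-x)⁻¹ * Real.log x) := by
            rw [show (2*((x:ℝ)-1)) = -(2*(1-x)) by ring, div_neg,
              show -(1/2) * ((1-x)⁻¹ * Real.log x) = -(Real.log x / (2*(1-x))) by
                field_simp]
        _ = ∑' n : ℕ, g n x := by
            rw [← hgeo, ← tsum_mul_right, ← tsum_mul_left]

  rw [setIntegral_congr_fun measurableSet_Ioc hcong,
    MeasureTheory.integral_tsum hmeas hfin]
  simp_rw [hgval]
  rw [(hsum1.div_const 2).tsum_eq]
  ring

private lemma main1 : (∫ x in (0:ℝ)..1, ∫ y in (0:ℝ)..(1 - x), 1 / (2 * (1 - x) * (x + y)))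
    = ∫ x in (0:ℝ)..1, Real.log x / (2 * (x - 1)) := by
  apply intervalIntegral.integral_congr_ae
  have h1 : ∀ᵐ x : ℝ, x ≠ 1 := by
    rw [MeasureTheory.ae_iff]
    simp only [ne_eq, not_not, Set.setOf_eq_eq_singleton]
    exact Real.volume_singleton
  filter_upwards [h1] with x hx1 hx
  rw [Set.uIoc_of_le (by norm_num : (0:ℝ) ≤ 1)] at hx
  have hx0 : 0 < x := hx.1
  have hxlt : x < 1 := lt_of_le_of_ne hx.2 hx1
  have hne : (1:ℝ) - x ≠ 0 := by linarith
  calc (∫ y in (0:ℝ)..(1 - x), 1 / (2 * (1 - x) * (x + y)))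
      = ∫ y in (0:ℝ)..(1 - x), (2 * (1 - x))⁻¹ * (x + y)⁻¹ := by
        apply intervalIntegral.integral_congr
        intro y _
        simp only [one_div, mul_inv]
    _ = (2 * (1 - x))⁻¹ * ∫ y in (0:ℝ)..(1 - x), (x + y)⁻¹ :=
        intervalIntegral.integral_const_mul _ _
    _ = (2 * (1 - x))⁻¹ * (-Real.log x) := by
        congr 1
        have := intervalIntegral.integral_comp_add_left (a := (0:ℝ)) (b := 1 - x)
          (fun u : ℝ => u⁻¹) x
        rw [this]
        norm_num
        rw [integral_inv_of_pos hx0 one_pos, one_div, Real.log_inv]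
    _ = Real.log x / (2 * (x - 1)) := by
        rw [show 2*((x:ℝ)-1) = -(2*(1-x)) by ring, div_neg, mul_neg, div_eq_inv_mul]

end CassaigneAux


/-- The total mass of the invariant density of the Cassaigne algorithm:
`∫₀¹ ∫₀^{1-x} 1/(2(1-x)(x+y)) dy dx = π²/12`; equivalently
`∫₀¹ (log x)/(2(x-1)) dx = π²/12`. -/
theorem stmt_12 :
    (∫ x in (0:ℝ)..1, ∫ y in (0:ℝ)..(1 - x), 1 / (2 * (1 - x) * (x + y))) =
      Real.pi ^ 2 / 12 ∧
    (∫ x in (0:ℝ)..1, Real.log x / (2 * (x - 1))) = Real.pi ^ 2 / 12 := by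
  exact ⟨main1.trans main2, main2⟩
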